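/- (Falik–Samorodnitsky entropy lower bound) If X is a random variable with X ≥ 0 almost surely and E[X²] < ∞, then Ent(X²) ≥ E[X²] · log( E[X²] / (E[X])² ). -/

import Mathlib

open MeasureTheory ProbabilityTheory
open scoped ENNReal

/-- The entropy `Ent(Y) = E[Y log Y] − E[Y] log E[Y]` of a nonnegative random variable,
as an extended real number: it is `+∞` when `Y log Y` fails to be integrable. -/
noncomputable def entE {Ω : Type} [MeasurableSpace Ω] (μ : Measure Ω) (Y : Ω → ℝ) :
    EReal :=
  open Classical in
  if Integrable (fun ω => Y ω * Real.log (Y ω)) μ then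
    ((∫ ω, Y ω * Real.log (Y ω) ∂μ
      - (∫ ω, Y ω ∂μ) * Real.log (∫ ω, Y ω ∂μ) : ℝ) : EReal)
  else ⊤

/-- Pointwise inequality used in the Falik–Samorodnitsky bound:
for `x ≥ 0` and `c > 0`, `x² log(cx) + (x² − cx) ≤ x² log x²`. -/
lemma fs_pointwise (c x : ℝ) (hc : 0 < c) (hx : 0 ≤ x) :
    x ^ 2 * Real.log (c * x) + (x ^ 2 - c * x) ≤ x ^ 2 * Real.log (x ^ 2) := by
  rcases hx.eq_or_lt with h0 | hx
  · simp [← h0]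
  · have hlog : Real.log (c / x) ≤ c / x - 1 :=
      Real.log_le_sub_one_of_pos (by positivity)
    have h1 : Real.log (c * x) = Real.log c + Real.log x := Real.log_mul hc.ne' hx.ne'
    have h2 : Real.log (x ^ 2) = 2 * Real.log x := by
      rw [Real.log_pow]; push_cast; ring
    have h3 : Real.log (c / x) = Real.log c - Real.log x := Real.log_div hc.ne' hx.ne'
    have h4 : x ^ 2 * Real.log (c / x) ≤ x ^ 2 * (c / x - 1) :=
      mul_le_mul_of_nonneg_left hlog (sq_nonneg x)
    have h5 : x ^ 2 * (c / x - 1) = c * x - x ^ 2 := by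
      field_simp
    rw [h3, h5] at h4
    rw [h1, h2]
    nlinarith [h4]

/-- **Falik–Samorodnitsky entropy lower bound.**
If `X ≥ 0` almost surely and `E[X²] < ∞`, then
`Ent(X²) ≥ E[X²] · log(E[X²] / (E[X])²)`. -/
theorem falik_samorodnitsky_entropy_lower_bound
    {Ω : Type} [MeasureSpace Ω] [IsProbabilityMeasure (ℙ : Measure Ω)]
    (X : Ω → ℝ) (hpos : ∀ᵐ ω ∂(ℙ : Measure Ω), 0 ≤ X ω)
    (hL2 : MemLp X 2 ℙ) :
    (((∫ ω, X ω ^ 2 ∂(ℙ : Measure Ω)) *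
        Real.log ((∫ ω, X ω ^ 2 ∂(ℙ : Measure Ω)) /
          (∫ ω, X ω ∂(ℙ : Measure Ω)) ^ 2) : ℝ) : EReal)
      ≤ entE (ℙ : Measure Ω) (fun ω => X ω ^ 2) := by
  by_cases hInt : Integrable (fun ω => X ω ^ 2 * Real.log (X ω ^ 2)) ℙ
  · have hX1 : Integrable X ℙ := hL2.integrable one_le_two
    have hX2 : Integrable (fun ω => X ω ^ 2) ℙ := hL2.integrable_sq
    rw [entE, if_pos hInt]
    rw [EReal.coe_le_coe_iff]
    set m := ∫ ω, X ω ∂(ℙ : Measure Ω) with hm_def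
    set s := ∫ ω, X ω ^ 2 ∂(ℙ : Measure Ω) with hs_def
    have hm0 : 0 ≤ m := integral_nonneg_of_ae hpos
    rcases hm0.eq_or_lt with hm | hm
    · -- degenerate case: E[X] = 0, hence X = 0 a.s.
      have hX0 : X =ᵐ[ℙ] fun _ => 0 := (integral_eq_zero_iff_of_nonneg_ae hpos hX1).mp hm.symm
      have hsq0 : (fun ω => X ω ^ 2) =ᵐ[ℙ] fun _ => (0 : ℝ) :=
        hX0.mono fun ω hω => by simp only at hω; simp [hω]
      have hll0 : (fun ω => X ω ^ 2 * Real.log (X ω ^ 2)) =ᵐ[ℙ] fun _ => (0 : ℝ) :=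
        hX0.mono fun ω hω => by simp only at hω; simp [hω]
      have hs : s = 0 := by rw [hs_def, integral_congr_ae hsq0, integral_const]; simp
      have hT : ∫ ω, X ω ^ 2 * Real.log (X ω ^ 2) ∂(ℙ : Measure Ω) = 0 := by
        rw [integral_congr_ae hll0, integral_const]; simp
      rw [hs, hT]
      simp
    · -- main case: E[X] > 0
      have hs0 : 0 ≤ s := integral_nonneg fun ω => sq_nonneg _
      have hs : 0 < s := by
        rcases hs0.eq_or_lt with h | h
        · exfalso
          have hsq0 : (fun ω => X ω ^ 2) =ᵐ[ℙ] fun _ => (0 : ℝ) :=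
            (integral_eq_zero_iff_of_nonneg_ae (Filter.Eventually.of_forall
              fun ω => sq_nonneg _) hX2).mp h.symm
          have hX0 : X =ᵐ[ℙ] fun _ => (0 : ℝ) := hsq0.mono fun ω hω => by
            have h2 : X ω ^ 2 = 0 := by simpa using hω
            simpa using sq_eq_zero_iff.mp h2
          have : m = 0 := by
            rw [hm_def, integral_congr_ae hX0, integral_const]; simp
          exact hm.ne' this
        · exact h
      set c := s / m with hc_def
      have hcpos : 0 < c := div_pos hs hm
      -- pointwise inequality
      have hpt : ∀ᵐ ω ∂(ℙ : Measure Ω),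
          X ω ^ 2 * Real.log (c * X ω) + (X ω ^ 2 - c * X ω)
            ≤ X ω ^ 2 * Real.log (X ω ^ 2) := by
        filter_upwards [hpos] with ω hω
        exact fs_pointwise c (X ω) hcpos hω
      -- rewrite the left side into an explicitly integrable combination
      have hgeq : (fun ω => X ω ^ 2 * Real.log (c * X ω) + (X ω ^ 2 - c * X ω))
          = fun ω => (Real.log c * X ω ^ 2 + (1/2) * (X ω ^ 2 * Real.log (X ω ^ 2)))
              + (X ω ^ 2 - c * X ω) := by
        funext ω
        rcases eq_or_ne (X ω) 0 with h | h
        · simp [h]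
        · rw [Real.log_mul hcpos.ne' h, Real.log_pow]
          push_cast
          ring
      have hIa1 : Integrable (fun ω => Real.log c * X ω ^ 2) ℙ := hX2.const_mul _
      have hIa2 : Integrable (fun ω => (1/2) * (X ω ^ 2 * Real.log (X ω ^ 2))) ℙ :=
        hInt.const_mul _
      have hIb1 : Integrable (fun ω => c * X ω) ℙ := hX1.const_mul c
      have hIa : Integrable
          (fun ω => Real.log c * X ω ^ 2 + (1/2) * (X ω ^ 2 * Real.log (X ω ^ 2))) ℙ :=
        hIa1.add hIa2
      have hIb : Integrable (fun ω => X ω ^ 2 - c * X ω) ℙ := hX2.sub hIb1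
      have hgInt : Integrable
          (fun ω => X ω ^ 2 * Real.log (c * X ω) + (X ω ^ 2 - c * X ω)) ℙ := by
        rw [hgeq]
        exact hIa.add hIb
      have hmono := integral_mono_ae hgInt hInt hpt
      set T := ∫ ω, X ω ^ 2 * Real.log (X ω ^ 2) ∂(ℙ : Measure Ω) with hT_def
      have hgval : ∫ ω, (X ω ^ 2 * Real.log (c * X ω) + (X ω ^ 2 - c * X ω)) ∂(ℙ : Measure Ω)
          = (Real.log c * s + (1/2) * T) + (s - c * m) := by
        rw [hgeq]
        rw [integral_add hIa hIb, integral_add hIa1 hIa2,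
          integral_sub hX2 hIb1,
          integral_const_mul, integral_const_mul, integral_const_mul, ← hs_def, ← hm_def,
          ← hT_def]
      rw [hgval] at hmono
      have hcm : c * m = s := div_mul_cancel₀ s hm.ne'
      have hT2 : 2 * (s * Real.log c) ≤ T := by nlinarith [hmono, hcm]
      have hlog : Real.log (s / m ^ 2) = 2 * Real.log c - Real.log s := by
        rw [hc_def, Real.log_div hs.ne' (pow_ne_zero 2 hm.ne'),
          Real.log_div hs.ne' hm.ne', Real.log_pow]
        push_cast
        ring
      rw [hlog]
      nlinarith [hT2]
  · rw [entE, if_neg hInt]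
    exact le_top
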